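/- Adding one box to every row shifts out a full monomial: for any composition λ ∈ ℕ^n and basement σ, E^σ_{(λ_1+1,…,λ_n+1)}(x; q, t) = (x_1 ⋯ x_n) · E^σ_{(λ_1,…,λ_n)}(x; q, t). -/
import Mathlib


open MvPolynomial Finset
open scoped Classical

noncomputable section

variable {n : ℕ}

/-- The augmented filling determined by a filling `G` of the non-basement boxes of
the diagram of shape `lam` with basement `σ`: the entry in row `r`, column `c`
(non-basement columns are `1,…,lam r`; column `0` is the basement, whose entry in
row `r` is `σ r`). -/
def augFill (lam : Fin n → ℕ) (σ : Equiv.Perm (Fin n))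
    (G : (r : Fin n) → Fin (lam r) → Fin n) (r : Fin n) (c : ℕ) : Fin n :=
  if h : 1 ≤ c ∧ c ≤ lam r then G r ⟨c - 1, by omega⟩ else σ r

/-- Non-attacking: no two equal entries in the same column (basement included via
distinctness of `σ`), and no two equal entries in adjacent columns where the
rightmost of the two boxes lies in a row strictly below the other. -/
def NonAttacking (lam : Fin n → ℕ) (F : Fin n → ℕ → Fin n) : Prop :=
  (∀ r r' c, r ≠ r' → 1 ≤ c → c ≤ lam r → c ≤ lam r' → F r c ≠ F r' c) ∧
  (∀ r r' c, r < r' → (c = 0 ∨ c ≤ lam r) → c + 1 ≤ lam r' → F r c ≠ F r' (c + 1))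

/-- The arm of the box in row `r`, column `c` of the augmented diagram of shape `lam`. -/
def armOf (lam : Fin n → ℕ) (r : Fin n) (c : ℕ) : ℕ :=
  (Finset.univ.filter (fun r' => r < r' ∧ lam r' ≤ lam r ∧ c ≤ lam r')).card +
  (Finset.univ.filter (fun r' => r' < r ∧ lam r' < lam r ∧ c - 1 ≤ lam r')).card

/-- The leg of the box in row `r`, column `c`: the number of boxes to its right. -/
def legOf (lam : Fin n → ℕ) (r : Fin n) (c : ℕ) : ℕ := lam r - c

/-- The major index: the sum of `leg + 1` over all descents, where a descent is a
non-basement box whose entry is strictly larger than the entry directly to its left. -/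
def majF (lam : Fin n → ℕ) (F : Fin n → ℕ → Fin n) : ℕ :=
  ∑ r : Fin n, ∑ c ∈ Finset.Icc 1 (lam r),
    if F r (c - 1) < F r c then legOf lam r c + 1 else 0

/-- The inversion-triple condition on the three values `a` (left), `b` (right),
`cc` (the third box), with ties broken as `b₁ < c₂ < a₃`. -/
def InvTriple (a b cc : Fin n) : Prop :=
  (cc < b ∧ b ≤ a) ∨ (b ≤ a ∧ a < cc) ∨ (a < cc ∧ cc < b)

/-- The number of coinversions: type A and type B triples that are not inversion triples. -/
def coinvF (lam : Fin n → ℕ) (F : Fin n → ℕ → Fin n) : ℕ :=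
  (∑ r : Fin n, ∑ r' : Fin n, ((Finset.Icc 1 (lam r')).filter (fun c =>
      r < r' ∧ lam r' ≤ lam r ∧ ¬ InvTriple (F r (c - 1)) (F r c) (F r' c))).card) +
  (∑ r : Fin n, ∑ r' : Fin n, ((Finset.Icc 1 (lam r)).filter (fun c =>
      r' < r ∧ lam r' < lam r ∧ c - 1 ≤ lam r' ∧
        ¬ InvTriple (F r (c - 1)) (F r c) (F r' (c - 1)))).card)

variable (K : Type) [Field K]

/-- The weight monomial `x^F` of a filling. -/
def fweight (lam : Fin n → ℕ) (F : Fin n → ℕ → Fin n) : MvPolynomial (Fin n) K :=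
  ∏ r : Fin n, ∏ c ∈ Finset.Icc 1 (lam r), X (F r c)

/-- The product `∏_{u : F(d(u)) ≠ F(u)} (1−t)/(1−q^{1+leg u} t^{1+arm u})` over
non-basement boxes whose entry differs from the entry directly to the left. -/
def denomProd (lam : Fin n → ℕ) (q t : K) (F : Fin n → ℕ → Fin n) : K :=
  ∏ r : Fin n, ∏ c ∈ Finset.Icc 1 (lam r),
    if F r (c - 1) ≠ F r c then
      (1 - t) / (1 - q ^ (1 + legOf lam r c) * t ^ (1 + armOf lam r c)) else 1

/-- The permuted-basement non-symmetric Macdonald polynomial `E^σ_λ(x; q, t)`,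
via the Haglund–Haiman–Loehr-type combinatorial formula over non-attacking fillings. -/
def macE (lam : Fin n → ℕ) (σ : Equiv.Perm (Fin n)) (q t : K) : MvPolynomial (Fin n) K :=
  ∑ G : ((r : Fin n) → Fin (lam r) → Fin n),
    if NonAttacking lam (augFill lam σ G) then
      C (q ^ majF lam (augFill lam σ G) * t ^ coinvF lam (augFill lam σ G) *
          denomProd K lam q t (augFill lam σ G)) *
        fweight K lam (augFill lam σ G)
    else 0

/-! ### Auxiliary machinery for the proof -/

lemma sum_Icc_shift {M : Type*} [AddCommMonoid M] (m : ℕ) (g : ℕ → M) :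
    ∑ c ∈ Finset.Icc 1 (m + 1), g c = g 1 + ∑ c ∈ Finset.Icc 1 m, g (c + 1) := by
  induction m with
  | zero => simp
  | succ m ih =>
    rw [Finset.sum_Icc_succ_top (by omega : 1 ≤ m + 1 + 1), ih,
      Finset.sum_Icc_succ_top (by omega : 1 ≤ m + 1), add_assoc]

lemma prod_Icc_shift {M : Type*} [CommMonoid M] (m : ℕ) (g : ℕ → M) :
    ∏ c ∈ Finset.Icc 1 (m + 1), g c = g 1 * ∏ c ∈ Finset.Icc 1 m, g (c + 1) := by
  induction m with
  | zero => simp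
  | succ m ih =>
    rw [Finset.prod_Icc_succ_top (by omega : 1 ≤ m + 1 + 1), ih,
      Finset.prod_Icc_succ_top (by omega : 1 ≤ m + 1), mul_assoc]

/-- Prepending the basement value to every row. -/
def phiFill (lam : Fin n → ℕ) (σ : Equiv.Perm (Fin n))
    (G : (r : Fin n) → Fin (lam r) → Fin n) : (r : Fin n) → Fin (lam r + 1) → Fin n :=
  fun r => Fin.cons (σ r) (G r)

lemma augFill_zero (lam : Fin n → ℕ) (σ : Equiv.Perm (Fin n))
    (G : (r : Fin n) → Fin (lam r) → Fin n) (r : Fin n) :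
    augFill lam σ G r 0 = σ r := by
  unfold augFill; rw [dif_neg (by omega)]

lemma augFill_pos (lam : Fin n → ℕ) (σ : Equiv.Perm (Fin n))
    (G : (r : Fin n) → Fin (lam r) → Fin n) (r : Fin n) (c : ℕ)
    (h1 : 1 ≤ c) (h2 : c ≤ lam r) :
    augFill lam σ G r c = G r ⟨c - 1, by omega⟩ := by
  unfold augFill; exact dif_pos ⟨h1, h2⟩

lemma augFill_gt (lam : Fin n → ℕ) (σ : Equiv.Perm (Fin n))
    (G : (r : Fin n) → Fin (lam r) → Fin n) (r : Fin n) (c : ℕ)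
    (h : lam r < c) :
    augFill lam σ G r c = σ r := by
  unfold augFill; rw [dif_neg (by omega)]

lemma augFill_phi (lam : Fin n → ℕ) (σ : Equiv.Perm (Fin n))
    (G : (r : Fin n) → Fin (lam r) → Fin n) (r : Fin n) (c : ℕ) :
    augFill (fun i => lam i + 1) σ (phiFill lam σ G) r c
      = augFill lam σ G r (c - 1) := by
  match c with
  | 0 =>
    show augFill (fun i => lam i + 1) σ (phiFill lam σ G) r 0 = augFill lam σ G r 0
    rw [augFill_zero, augFill_zero]
  | 1 =>
    rw [augFill_pos (fun i => lam i + 1) σ _ r 1 le_rfl ((by omega : (1:ℕ) ≤ lam r + 1))]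
    simp [phiFill, augFill_zero]
  | (c + 2) =>
    by_cases h : c + 2 ≤ lam r + 1
    · rw [augFill_pos (fun i => lam i + 1) σ _ r (c + 2) (by omega)
        ((by omega : c + 2 ≤ lam r + 1)),
        augFill_pos lam σ G r (c + 2 - 1) (by omega) (by omega)]
      have hc : c < lam r := by omega
      show (Fin.cons (σ r) (G r) : Fin (lam r + 1) → Fin n) (Fin.succ ⟨c, hc⟩) = G r ⟨c, hc⟩
      rw [Fin.cons_succ]
    · rw [augFill_gt (fun i => lam i + 1) σ _ r (c + 2) ((by omega : lam r + 1 < c + 2)),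
        augFill_gt lam σ G r (c + 2 - 1) (by omega)]

lemma invTriple_of_ne {a cc : Fin n} (h : a ≠ cc) : InvTriple a a cc := by
  rcases lt_or_gt_of_ne h with h' | h'
  · exact Or.inr (Or.inl ⟨le_refl _, h'⟩)
  · exact Or.inl ⟨h', le_refl _⟩

lemma armOf_phi (lam : Fin n → ℕ) (r : Fin n) (c : ℕ) :
    armOf (fun i => lam i + 1) r (c + 1) = armOf lam r c := by
  unfold armOf
  congr 1 <;> congr 1 <;> ext r' <;> simp <;> intro _ <;> constructor <;> intro h <;>
    constructor <;> omega

lemma majF_phi (lam : Fin n → ℕ) (σ : Equiv.Perm (Fin n))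
    (G : (r : Fin n) → Fin (lam r) → Fin n) :
    majF (fun i => lam i + 1) (augFill (fun i => lam i + 1) σ (phiFill lam σ G))
      = majF lam (augFill lam σ G) := by
  unfold majF legOf
  apply Finset.sum_congr rfl
  intro r _
  rw [sum_Icc_shift]
  simp only [augFill_phi]
  rw [if_neg (lt_irrefl _), zero_add]
  apply Finset.sum_congr rfl
  intro c _
  have h1 : c + 1 - 1 - 1 = c - 1 := by omega
  have h2 : lam r + 1 - (c + 1) = lam r - c := by omega
  have h3 : c + 1 - 1 = c := by omega
  rw [h1, h2, h3]

lemma coinvF_phi (lam : Fin n → ℕ) (σ : Equiv.Perm (Fin n))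
    (G : (r : Fin n) → Fin (lam r) → Fin n) :
    coinvF (fun i => lam i + 1) (augFill (fun i => lam i + 1) σ (phiFill lam σ G))
      = coinvF lam (augFill lam σ G) := by
  set F := augFill lam σ G with hF
  unfold coinvF
  congr 1
  · apply Finset.sum_congr rfl; intro r _
    apply Finset.sum_congr rfl; intro r' _
    rw [Finset.card_filter, Finset.card_filter, sum_Icc_shift]
    simp only [augFill_phi, ← hF]
    rw [if_neg, zero_add]
    · apply Finset.sum_congr rfl
      intro c _
      have h1 : c + 1 - 1 - 1 = c - 1 := by omega
      have h2 : c + 1 - 1 = c := by omega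
      rw [h1, h2]
      by_cases hA : r < r' ∧ lam r' ≤ lam r ∧ ¬ InvTriple (F r (c-1)) (F r c) (F r' c)
      · rw [if_pos ⟨hA.1, by omega, hA.2.2⟩, if_pos hA]
      · rw [if_neg, if_neg hA]
        intro h; exact hA ⟨h.1, by omega, h.2.2⟩
    · rintro ⟨hlt, -, hni⟩
      refine hni ?_
      simp only [Nat.sub_self, augFill_zero]
      exact invTriple_of_ne (fun h => (ne_of_lt hlt) (σ.injective h))
  · apply Finset.sum_congr rfl; intro r _
    apply Finset.sum_congr rfl; intro r' _
    rw [Finset.card_filter, Finset.card_filter, sum_Icc_shift]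
    simp only [augFill_phi, ← hF]
    rw [if_neg, zero_add]
    · apply Finset.sum_congr rfl
      intro c _
      have h1 : c + 1 - 1 - 1 = c - 1 := by omega
      have h2 : c + 1 - 1 = c := by omega
      rw [h1, h2]
      by_cases hA : r' < r ∧ lam r' < lam r ∧ c - 1 ≤ lam r' ∧
          ¬ InvTriple (F r (c-1)) (F r c) (F r' (c-1))
      · rw [if_pos ⟨hA.1, by omega, by omega, hA.2.2.2⟩, if_pos hA]
      · rw [if_neg, if_neg hA]
        intro h; exact hA ⟨h.1, by omega, by omega, h.2.2.2⟩
    · rintro ⟨hlt, -, -, hni⟩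
      refine hni ?_
      simp only [Nat.sub_self, augFill_zero]
      exact invTriple_of_ne (fun h => (ne_of_lt hlt).symm (σ.injective h))

lemma denomProd_phi (lam : Fin n → ℕ) (σ : Equiv.Perm (Fin n)) (q t : K)
    (G : (r : Fin n) → Fin (lam r) → Fin n) :
    denomProd K (fun i => lam i + 1) q t (augFill (fun i => lam i + 1) σ (phiFill lam σ G))
      = denomProd K lam q t (augFill lam σ G) := by
  unfold denomProd legOf
  apply Finset.prod_congr rfl
  intro r _
  rw [prod_Icc_shift]
  simp only [augFill_phi]
  rw [if_neg (by simp), one_mul]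
  apply Finset.prod_congr rfl
  intro c _
  have h1 : c + 1 - 1 - 1 = c - 1 := by omega
  have h2 : c + 1 - 1 = c := by omega
  have h3 : lam r + 1 - (c + 1) = lam r - c := by omega
  rw [h1, h2, h3, armOf_phi]

lemma fweight_phi (lam : Fin n → ℕ) (σ : Equiv.Perm (Fin n))
    (G : (r : Fin n) → Fin (lam r) → Fin n) :
    fweight K (fun i => lam i + 1) (augFill (fun i => lam i + 1) σ (phiFill lam σ G))
      = (∏ i : Fin n, X i) * fweight K lam (augFill lam σ G) := by
  unfold fweight
  calc ∏ r : Fin n, ∏ c ∈ Finset.Icc 1 (lam r + 1),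
        (X (augFill (fun i => lam i + 1) σ (phiFill lam σ G) r c) : MvPolynomial (Fin n) K)
      = ∏ r : Fin n, (X (σ r) * ∏ c ∈ Finset.Icc 1 (lam r), X (augFill lam σ G r c)) := by
        apply Finset.prod_congr rfl
        intro r _
        rw [prod_Icc_shift]
        simp only [augFill_phi]
        rw [Nat.sub_self, augFill_zero]
        simp only [Nat.add_sub_cancel]
    _ = (∏ r : Fin n, (X (σ r) : MvPolynomial (Fin n) K)) *
          ∏ r : Fin n, ∏ c ∈ Finset.Icc 1 (lam r), X (augFill lam σ G r c) :=
      Finset.prod_mul_distrib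
    _ = _ := by rw [Equiv.prod_comp σ (fun i => (X i : MvPolynomial (Fin n) K))]

lemma nonAttacking_phi (lam : Fin n → ℕ) (σ : Equiv.Perm (Fin n))
    (G : (r : Fin n) → Fin (lam r) → Fin n) :
    NonAttacking (fun i => lam i + 1) (augFill (fun i => lam i + 1) σ (phiFill lam σ G)) ↔
      NonAttacking lam (augFill lam σ G) := by
  set F := augFill lam σ G with hF
  unfold NonAttacking
  simp only [augFill_phi, ← hF]
  constructor
  · rintro ⟨h1, h2⟩
    constructor
    · intro r r' c hne hc1 hc2 hc3
      have := h1 r r' (c + 1) hne (by omega) (by omega) (by omega)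
      simpa using this
    · intro r r' c hlt hc1 hc2
      have := h2 r r' (c + 1) hlt (Or.inr (by omega)) (by omega)
      simpa using this
  · rintro ⟨h1, h2⟩
    constructor
    · intro r r' c hne hc1 hc2 hc3
      match c, hc1 with
      | 1, _ =>
        simp only [Nat.sub_self, augFill_zero]
        exact fun h => hne (σ.injective h)
      | (c + 2), _ =>
        have := h1 r r' (c + 1) hne (by omega) (by omega) (by omega)
        simpa using this
    · intro r r' c hlt hc1 hc2
      match c with
      | 0 =>
        simp only [Nat.sub_self, Nat.zero_sub, augFill_zero]
        exact fun h => (ne_of_lt hlt) (σ.injective h)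
      | (c + 1) =>
        have hc1' : c = 0 ∨ c ≤ lam r := by omega
        have := h2 r r' c hlt hc1' (by omega)
        simpa using this

/-- In a non-attacking filling of `λ + 1`, the first column must equal the basement. -/
lemma col1_eq (lam : Fin n → ℕ) (σ : Equiv.Perm (Fin n))
    (G' : (r : Fin n) → Fin (lam r + 1) → Fin n)
    (h : NonAttacking (fun i => lam i + 1) (augFill (fun i => lam i + 1) σ G')) :
    ∀ r, G' r 0 = σ r := by
  set F' := augFill (fun i => lam i + 1) σ G' with hF'
  have hval : ∀ r, F' r 1 = G' r 0 := by
    intro r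
    rw [hF', augFill_pos (fun i => lam i + 1) σ G' r 1 le_rfl ((by omega : (1:ℕ) ≤ lam r + 1))]
    simp
  have hinj : ∀ r r' : Fin n, r ≠ r' → F' r 1 ≠ F' r' 1 := by
    intro r r' hne
    exact h.1 r r' 1 hne (le_refl 1) ((by omega : (1:ℕ) ≤ lam r + 1))
      ((by omega : (1:ℕ) ≤ lam r' + 1))
  have hlow : ∀ r r' : Fin n, r < r' → σ r ≠ F' r' 1 := by
    intro r r' hlt
    have := h.2 r r' 0 hlt (Or.inl rfl) ((by omega : 0 + 1 ≤ lam r' + 1))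
    rwa [show F' r 0 = σ r from by rw [hF', augFill_zero]] at this
  have key : ∀ m : ℕ, ∀ r : Fin n, n - 1 - (r : ℕ) < m → F' r 1 = σ r := by
    intro m
    induction m with
    | zero => exact fun r hr => absurd hr (by omega)
    | succ m ih =>
      intro r hr
      obtain ⟨s, hs⟩ : ∃ s, σ s = F' r 1 := ⟨σ.symm (F' r 1), σ.apply_symm_apply _⟩
      rcases lt_trichotomy s r with hsr | hsr | hsr
      · exact absurd hs (hlow s r hsr)
      · rw [← hs, hsr]
      · exfalso
        have hs2 : F' s 1 = σ s := by
          apply ih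
          have h1 : (r : ℕ) < s := hsr
          have h2 : (s : ℕ) < n := s.isLt
          omega
        exact hinj r s (ne_of_lt hsr) (by rw [hs2, ← hs])
  intro r
  rw [← hval, key n r (by have := r.isLt; omega)]

lemma phiFill_injective (lam : Fin n → ℕ) (σ : Equiv.Perm (Fin n)) :
    Function.Injective (phiFill lam σ) := by
  intro G G' h
  funext r i
  have := congrFun (congrFun h r) i.succ
  simpa [phiFill, Fin.cons_succ] using this

/-- adding one box to every row multiplies by `x₁⋯xₙ`:
`E^σ_{λ+1}(x; q, t) = (x₁⋯xₙ)·E^σ_λ(x; q, t)` (for generic `q`, `t`, i.e. all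
the denominators `1 − q^{a+1} t^{b+1}` are nonzero). -/
theorem macE_add_row {n : ℕ} (lam : Fin n → ℕ) (σ : Equiv.Perm (Fin n))
    (q t : K) (hden : ∀ a b : ℕ, (1 : K) - q ^ (a + 1) * t ^ (b + 1) ≠ 0) :
    macE K (fun i => lam i + 1) σ q t = (∏ i : Fin n, X i) * macE K lam σ q t := by
  classical
  unfold macE
  rw [Finset.mul_sum]
  have hzero : ∀ G' ∈ Finset.univ, G' ∉ Finset.univ.image (phiFill lam σ) →
      (if NonAttacking (fun i => lam i + 1) (augFill (fun i => lam i + 1) σ G') then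
        C (q ^ majF (fun i => lam i + 1) (augFill (fun i => lam i + 1) σ G') *
            t ^ coinvF (fun i => lam i + 1) (augFill (fun i => lam i + 1) σ G') *
            denomProd K (fun i => lam i + 1) q t (augFill (fun i => lam i + 1) σ G')) *
          fweight K (fun i => lam i + 1) (augFill (fun i => lam i + 1) σ G')
      else 0) = 0 := by
    intro G' _ hG'
    rw [if_neg]
    intro hNA
    apply hG'
    rw [Finset.mem_image]
    refine ⟨fun r i => G' r i.succ, Finset.mem_univ _, ?_⟩
    funext r
    have h0 : G' r 0 = σ r := col1_eq lam σ G' hNA r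
    show Fin.cons (σ r) (Fin.tail (G' r)) = G' r
    rw [← h0, Fin.cons_self_tail]
  rw [← Finset.sum_subset (Finset.subset_univ (Finset.univ.image (phiFill lam σ))) hzero,
    Finset.sum_image (fun G _ G' _ h => phiFill_injective lam σ h)]
  apply Finset.sum_congr rfl
  intro G _
  by_cases hNA : NonAttacking lam (augFill lam σ G)
  · rw [if_pos hNA, if_pos ((nonAttacking_phi lam σ G).mpr hNA),
      majF_phi, coinvF_phi, denomProd_phi, fweight_phi]
    ring
  · rw [if_neg hNA, if_neg (fun h => hNA ((nonAttacking_phi lam σ G).mp h)), mul_zero]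

end
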